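/- arXiv:1703.04805 — 2 statements merged into one kernel-verified Lean document; each statement's English description precedes it below -/
import Mathlib

section
/- Let 1 < p < ∞, q = p/(p-1), and for ξ ∈ 𝔻 define Ψ_ξ(z) = Γ(2/p)Γ(2/q)·∑_{k=0}^∞ ε_k (z·conj(ξ))^k where ε_k = ((2/p)_k/k!)·(Γ(k+2)Γ(k+1)/(Γ(k+1+2/q)Γ(k+2/p)) - 1). Then sup_{ξ∈𝔻} ∫_𝔻 |Ψ_ξ(z)|^p dν(z) < ∞. -/
open MeasureTheory Real Set ComplexConjugate

/-- Pochhammer symbol `(a)_n` for a real number `a`. -/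
noncomputable def poch (a : ℝ) (n : ℕ) : ℝ := ∏ i ∈ Finset.range n, (a + i)

/-- The coefficients `ε_k` from Lemma 2.5. -/
noncomputable def eps (p q : ℝ) (k : ℕ) : ℝ :=
  poch (2 / p) k / k.factorial *
    (Real.Gamma (k + 2) * Real.Gamma (k + 1) /
        (Real.Gamma (k + 1 + 2 / q) * Real.Gamma (k + 2 / p)) - 1)

/-- The function `Ψ_ξ`. -/
noncomputable def PsiF (p q : ℝ) (ξ z : ℂ) : ℂ :=
  ((Real.Gamma (2 / p) * Real.Gamma (2 / q) : ℝ) : ℂ) *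
    ∑' k : ℕ, ((eps p q k : ℝ) : ℂ) * (z * conj ξ) ^ k

open scoped ENNReal NNReal

lemma interp_le {y u : ℝ} (hy : 0 < y) (hu0 : 0 ≤ u) (hu1 : u ≤ 1) :
    Gamma (y + u) ≤ Gamma y * y ^ u := by
  have h1 : (0:ℝ) < y + 1 := by linarith
  have hyu : 0 < y + u := by linarith
  have hc := convexOn_log_Gamma.2 (mem_Ioi.mpr hy) (mem_Ioi.mpr h1)
    (by linarith : (0:ℝ) ≤ 1 - u) hu0 (by ring)
  have heq : (1 - u) • y + u • (y + 1) = y + u := by simp [smul_eq_mul]; ring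
  rw [heq] at hc
  simp only [Function.comp_apply, smul_eq_mul] at hc
  have hG : 0 < Gamma (y + u) := Gamma_pos_of_pos hyu
  have hGy : 0 < Gamma y := Gamma_pos_of_pos hy
  have hGy1 : 0 < Gamma (y + 1) := Gamma_pos_of_pos h1
  have := exp_le_exp.mpr hc
  rw [exp_log hG, exp_add, ← log_rpow hGy, ← log_rpow hGy1, exp_log (rpow_pos_of_pos hGy _),
    exp_log (rpow_pos_of_pos hGy1 _)] at this
  calc Gamma (y + u) ≤ Gamma y ^ (1 - u) * Gamma (y + 1) ^ u := this
    _ = Gamma y * y ^ u := by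
        rw [Real.Gamma_add_one hy.ne', mul_rpow hy.le hGy.le]
        rw [mul_comm (y ^ u), ← mul_assoc, ← Real.rpow_add hGy]
        norm_num

lemma interp_ge {y u : ℝ} (hy : 0 < y) (hu0 : 0 ≤ u) (hu1 : u ≤ 1) :
    Gamma y * y * (y + u) ^ (u - 1) ≤ Gamma (y + u) := by
  have hyu : 0 < y + u := by linarith
  have h := interp_le hyu (by linarith : (0:ℝ) ≤ 1 - u) (by linarith)
  rw [show y + u + (1 - u) = y + 1 by ring, Real.Gamma_add_one hy.ne'] at h
  have hp : (0:ℝ) < (y + u) ^ (1 - u) := rpow_pos_of_pos hyu _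
  rw [show u - 1 = -(1-u) by ring, rpow_neg hyu.le, ← div_eq_mul_inv, div_le_iff₀ hp]
  linarith [h]

lemma coef_le (k : ℕ) {t : ℝ} (ht0 : 0 < t) (ht2 : t < 2) :
    Gamma ((k:ℝ) + t) ≤ 2 / t * ((k:ℝ) + 1) ^ (t - 1) * Gamma ((k:ℝ) + 1) := by
  have hk0 : (0:ℝ) ≤ k := Nat.cast_nonneg k
  have hk1 : (1:ℝ) ≤ (k:ℝ) + 1 := by linarith
  have hkt : (0:ℝ) < (k:ℝ) + t := by linarith
  have hG : 0 < Gamma ((k:ℝ) + t) := Gamma_pos_of_pos hkt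
  have hG1 : 0 < Gamma ((k:ℝ) + 1) := Gamma_pos_of_pos (by linarith)
  have hp1 : (0:ℝ) < ((k:ℝ) + 1) ^ (t - 1) := rpow_pos_of_pos (by linarith) _
  rcases le_or_gt t 1 with h1 | h1
  · have h := interp_ge hkt (by linarith : (0:ℝ) ≤ 1 - t) (by linarith)
    rw [show (k:ℝ) + t + (1 - t) = (k:ℝ) + 1 by ring] at h
    -- h : Γ(k+t) * (k+t) * (k+1)^((1-t)-1) ≤ Γ(k+1)
    rw [show (1 - t) - 1 = -t by ring] at h
    have hpt : (0:ℝ) < ((k:ℝ) + 1) ^ t := rpow_pos_of_pos (by linarith) _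
    rw [rpow_neg (by linarith : (0:ℝ) ≤ (k:ℝ)+1), ← div_eq_mul_inv] at h
    have h2 : Gamma ((k:ℝ) + t) * ((k:ℝ) + t) ≤ Gamma ((k:ℝ)+1) * ((k:ℝ)+1) ^ t := by
      rw [div_le_iff₀ hpt] at h; linarith
    have h3 : ((k:ℝ)+1) ^ t = ((k:ℝ)+1) ^ (t-1) * ((k:ℝ)+1) := by
      rw [← Real.rpow_add_one (by linarith : ((k:ℝ)+1) ≠ 0)]; ring_nf
    have h4 : t * ((k:ℝ)+1) ≤ 2 * ((k:ℝ) + t) := by nlinarith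
    rw [h3] at h2
    rw [div_mul_eq_mul_div, div_mul_eq_mul_div, le_div_iff₀ ht0]
    nlinarith
  · have h := interp_le (show (0:ℝ) < (k:ℝ)+1 by linarith)
      (by linarith : (0:ℝ) ≤ t - 1) (by linarith)
    rw [show (k:ℝ) + 1 + (t - 1) = (k:ℝ) + t by ring] at h
    have h5 : (1:ℝ) ≤ 2 / t := by rw [le_div_iff₀ ht0]; linarith
    nlinarith

lemma interp_ge2 {y u : ℝ} (hy : 0 < y) (hu0 : 0 ≤ u) (hu1 : u ≤ 1) :
    Gamma y * y ≤ Gamma (y + u) * (y + u) ^ (1 - u) := by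
  have h := interp_ge hy hu0 hu1
  have hyu : (0:ℝ) < y + u := by linarith
  have hp : (0:ℝ) < (y + u) ^ (1 - u) := rpow_pos_of_pos hyu _
  rw [show u - 1 = -(1 - u) by ring, rpow_neg hyu.le] at h
  calc Gamma y * y = Gamma y * y * ((y+u) ^ (1-u))⁻¹ * ((y+u) ^ (1-u)) := by field_simp
    _ ≤ Gamma (y + u) * (y + u) ^ (1 - u) := mul_le_mul_of_nonneg_right h hp.le

lemma ratio_bound {x t : ℝ} (hx : 1 ≤ x) (ht0 : 0 < t) (ht2 : t < 2) :
    |Gamma x * Gamma (x + 1) / (Gamma (x + (t - 1)) * Gamma (x + (2 - t))) - 1| ≤ 2 / x := by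
  have hx0 : (0:ℝ) < x := by linarith
  have hGx : 0 < Gamma x := Gamma_pos_of_pos hx0
  have hGx1 : 0 < Gamma (x + 1) := Gamma_pos_of_pos (by linarith)
  have hxadd : Gamma (x + 1) = x * Gamma x := Real.Gamma_add_one hx0.ne'
  have hN : 0 < Gamma x * Gamma (x + 1) := mul_pos hGx hGx1
  have key : ∀ D : ℝ, 0 < D → (x - 2) * D ≤ Gamma x * Gamma (x + 1) * x →
      Gamma x * Gamma (x + 1) * x ≤ (x + 2) * D →
      |Gamma x * Gamma (x + 1) / D - 1| ≤ 2 / x := by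
    intro D hD hlow2 hup2
    have hl : 1 - 2 / x ≤ Gamma x * Gamma (x + 1) / D := by
      rw [le_div_iff₀ hD]
      have h : (1 - 2/x) * D * x ≤ Gamma x * Gamma (x + 1) * x := by
        rw [show (1 - 2/x) * D * x = (x - 2) * D by field_simp]
        exact hlow2
      exact le_of_mul_le_mul_right h hx0
    have hu : Gamma x * Gamma (x + 1) / D ≤ 1 + 2 / x := by
      rw [div_le_iff₀ hD]
      have h : Gamma x * Gamma (x + 1) * x ≤ (1 + 2/x) * D * x := by
        rw [show (1 + 2/x) * D * x = (x + 2) * D by field_simp]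
        exact hup2
      exact le_of_mul_le_mul_right h hx0
    rw [abs_le]; constructor <;> linarith
  rcases le_or_gt 1 t with h1 | h1
  -- Case 1 ≤ t < 2
  · have hu0 : (0:ℝ) ≤ t - 1 := by linarith
    have hu1 : t - 1 ≤ 1 := by linarith
    have hv0 : (0:ℝ) ≤ 2 - t := by linarith
    have hv1 : 2 - t ≤ 1 := by linarith
    have ha : (0:ℝ) < x + (t - 1) := by linarith
    have hb : (0:ℝ) < x + (2 - t) := by linarith
    have hGa : 0 < Gamma (x + (t - 1)) := Gamma_pos_of_pos ha
    have hGb : 0 < Gamma (x + (2 - t)) := Gamma_pos_of_pos hb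
    have hD : 0 < Gamma (x + (t - 1)) * Gamma (x + (2 - t)) := mul_pos hGa hGb
    apply key _ hD
    · have hA := interp_le hx0 hu0 hu1
      have hB := interp_le hx0 hv0 hv1
      have hxx : x ^ (t - 1) * x ^ (2 - t) = x := by
        rw [← rpow_add hx0]; norm_num
      have heq : Gamma x * x ^ (t-1) * (Gamma x * x ^ (2-t)) = Gamma x * Gamma (x+1) := by
        calc Gamma x * x ^ (t-1) * (Gamma x * x ^ (2-t))
            = Gamma x * Gamma x * (x ^ (t-1) * x ^ (2-t)) := by ring
          _ = Gamma x * Gamma (x+1) := by rw [hxx, hxadd]; ring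
      have hDN : Gamma (x + (t - 1)) * Gamma (x + (2 - t)) ≤ Gamma x * Gamma (x + 1) :=
        le_of_le_of_eq (mul_le_mul hA hB hGb.le (by positivity)) heq
      rcases le_or_gt 2 x with hx2 | hx2
      · have c1 := mul_le_mul_of_nonneg_left hDN (show (0:ℝ) ≤ x - 2 by linarith)
        have c2 : (x - 2) * (Gamma x * Gamma (x+1)) ≤ x * (Gamma x * Gamma (x+1)) :=
          mul_le_mul_of_nonneg_right (by linarith) hN.le
        calc (x - 2) * (Gamma (x + (t - 1)) * Gamma (x + (2 - t)))
            ≤ (x - 2) * (Gamma x * Gamma (x+1)) := c1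
          _ ≤ x * (Gamma x * Gamma (x+1)) := c2
          _ = Gamma x * Gamma (x + 1) * x := by ring
      · nlinarith
    · have h1' := interp_ge2 hx0 hu0 hu1
      rw [show (1 : ℝ) - (t - 1) = 2 - t by ring] at h1'
      have h2' := interp_ge2 hx0 hv0 hv1
      rw [show (1 : ℝ) - (2 - t) = t - 1 by ring] at h2'
      have hA0 : 0 < (x + (t - 1)) ^ (2 - t) := rpow_pos_of_pos ha _
      have hB0 : 0 < (x + (2 - t)) ^ (t - 1) := rpow_pos_of_pos hb _
      have hkey : (x + (t - 1)) ^ (2 - t) * (x + (2 - t)) ^ (t - 1) ≤ x + 1 := by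
        have e1 : (x + (t-1)) ^ (2-t) ≤ (x + 1) ^ (2 - t) :=
          rpow_le_rpow ha.le (by linarith) hv0
        have e2 : (x + (2-t)) ^ (t-1) ≤ (x + 1) ^ (t - 1) :=
          rpow_le_rpow hb.le (by linarith) hu0
        have e3 : (x + 1 : ℝ) ^ (2 - t) * (x + 1) ^ (t - 1) = x + 1 := by
          rw [← rpow_add (by linarith : (0:ℝ) < x + 1)]; norm_num
        calc (x + (t-1)) ^ (2-t) * (x + (2-t)) ^ (t-1)
            ≤ (x + 1) ^ (2 - t) * (x + 1) ^ (t - 1) :=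
              mul_le_mul e1 e2 hB0.le (by positivity)
          _ = x + 1 := e3
      have hstep := mul_le_mul h1' h2' (by positivity) (by positivity)
      have hAB : 0 < (x + (t - 1)) ^ (2 - t) * (x + (2 - t)) ^ (t - 1) := mul_pos hA0 hB0
      have goal' : Gamma x * Gamma (x + 1) * x *
            ((x + (t - 1)) ^ (2 - t) * (x + (2 - t)) ^ (t - 1)) ≤
          (x + 2) * (Gamma (x + (t - 1)) * Gamma (x + (2 - t))) *
            ((x + (t - 1)) ^ (2 - t) * (x + (2 - t)) ^ (t - 1)) := by
        rw [hxadd]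
        calc Gamma x * (x * Gamma x) * x *
              ((x + (t - 1)) ^ (2 - t) * (x + (2 - t)) ^ (t - 1))
            = (Gamma x * Gamma x * x * x) *
              ((x + (t - 1)) ^ (2 - t) * (x + (2 - t)) ^ (t - 1)) := by ring
          _ ≤ (Gamma x * Gamma x * x * x) * (x + 1) :=
              mul_le_mul_of_nonneg_left hkey (by positivity)
          _ ≤ (Gamma x * Gamma x * x * x) * (x + 2) :=
              mul_le_mul_of_nonneg_left (by linarith) (by positivity)
          _ = (x + 2) * (Gamma x * x * (Gamma x * x)) := by ring
          _ ≤ (x + 2) * (Gamma (x + (t - 1)) * (x + (t - 1)) ^ (2 - t) *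
              (Gamma (x + (2 - t)) * (x + (2 - t)) ^ (t - 1))) :=
              mul_le_mul_of_nonneg_left hstep (by linarith)
          _ = (x + 2) * (Gamma (x + (t - 1)) * Gamma (x + (2 - t))) *
              ((x + (t - 1)) ^ (2 - t) * (x + (2 - t)) ^ (t - 1)) := by ring
      exact le_of_mul_le_mul_right goal' hAB
  -- Case 0 < t < 1
  · set s := 1 - t with hsdef
    have hs0 : (0:ℝ) < s := by rw [hsdef]; linarith
    have hs1 : s ≤ 1 := by rw [hsdef]; linarith
    rw [show x + (t - 1) = x - s by rw [hsdef]; ring,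
        show x + (2 - t) = x + 1 + s by rw [hsdef]; ring]
    have hxs : (0:ℝ) < x - s := by linarith
    have hGa : 0 < Gamma (x - s) := Gamma_pos_of_pos hxs
    have hGb : 0 < Gamma (x + 1 + s) := Gamma_pos_of_pos (by linarith)
    have hD : 0 < Gamma (x - s) * Gamma (x + 1 + s) := mul_pos hGa hGb
    have hA' := interp_le hxs hs0.le hs1
    rw [show x - s + s = x by ring] at hA'
    have hA2' := interp_ge2 hxs hs0.le hs1
    rw [show x - s + s = x by ring] at hA2'
    have hB' := interp_le (show (0:ℝ) < x + 1 by linarith) hs0.le hs1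
    have hB2' := interp_ge2 (show (0:ℝ) < x + 1 by linarith) hs0.le hs1
    have hC0 : 0 < (x - s) ^ s := rpow_pos_of_pos hxs _
    have hE0 : 0 < (x + 1 + s) ^ (1 - s) := rpow_pos_of_pos (by linarith) _
    have hF0 : 0 < (x + 1) ^ s := rpow_pos_of_pos (by linarith) _
    have hG0 : 0 < x ^ (1 - s) := rpow_pos_of_pos hx0 _
    apply key _ hD
    · rcases le_or_gt x 2 with hx2 | hx2
      · nlinarith
      · have hFG : (x + 1) ^ s * x ^ (1 - s) ≤ x + 1 := by
          have e5 : x ^ (1-s) ≤ (x + 1) ^ (1 - s) :=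
            rpow_le_rpow hx0.le (by linarith) (by linarith)
          have e6 : (x + 1 : ℝ) ^ s * (x + 1) ^ (1 - s) = x + 1 := by
            rw [← rpow_add (by linarith : (0:ℝ) < x + 1)]; norm_num
          calc (x + 1) ^ s * x ^ (1-s) ≤ (x + 1) ^ s * (x + 1) ^ (1-s) :=
                mul_le_mul_of_nonneg_left e5 hF0.le
            _ = x + 1 := e6
        have main : (x - 2) * (Gamma (x - s) * Gamma (x + 1 + s)) * x ^ (1 - s) ≤
            Gamma x * Gamma (x + 1) * x * x ^ (1 - s) := by
          calc (x - 2) * (Gamma (x - s) * Gamma (x + 1 + s)) * x ^ (1 - s)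
              = (x - 2) * (Gamma (x - s) * Gamma (x + 1 + s) * x ^ (1 - s)) := by ring
            _ ≤ (x - 2) * (Gamma (x - s) * (Gamma (x + 1) * (x + 1) ^ s) * x ^ (1 - s)) := by
                refine mul_le_mul_of_nonneg_left ?_ (by linarith)
                exact mul_le_mul_of_nonneg_right
                  (mul_le_mul_of_nonneg_left hB' hGa.le) hG0.le
            _ = (x - 2) * (Gamma (x - s) * Gamma (x + 1)) * ((x + 1) ^ s * x ^ (1 - s)) := by
                ring
            _ ≤ (x - 2) * (Gamma (x - s) * Gamma (x + 1)) * (x + 1) :=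
                mul_le_mul_of_nonneg_left hFG (mul_nonneg (by linarith) (by positivity))
            _ = ((x - 2) * (x + 1)) * (Gamma (x - s) * Gamma (x + 1)) := by ring
            _ ≤ ((x - 1) * x) * (Gamma (x - s) * Gamma (x + 1)) :=
                mul_le_mul_of_nonneg_right (by nlinarith) (by positivity)
            _ = x * ((x - 1) * Gamma (x - s)) * Gamma (x + 1) := by ring
            _ ≤ x * ((x - s) * Gamma (x - s)) * Gamma (x + 1) := by
                refine mul_le_mul_of_nonneg_right
                  (mul_le_mul_of_nonneg_left
                    (mul_le_mul_of_nonneg_right (by linarith) hGa.le) hx0.le) hGx1.le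
            _ = x * (Gamma (x - s) * (x - s)) * Gamma (x + 1) := by ring
            _ ≤ x * (Gamma x * x ^ (1 - s)) * Gamma (x + 1) :=
                mul_le_mul_of_nonneg_right
                  (mul_le_mul_of_nonneg_left hA2' hx0.le) hGx1.le
            _ = Gamma x * Gamma (x + 1) * x * x ^ (1 - s) := by ring
        exact le_of_mul_le_mul_right main hG0
    · have hprod : (x - s) ^ s * (x + 1 + s) ^ (1 - s) ≤ x + 1 + s := by
        have e3 : (x - s) ^ s ≤ (x + 1 + s) ^ s := rpow_le_rpow hxs.le (by linarith) hs0.le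
        have e4 : (x + 1 + s : ℝ) ^ s * (x + 1 + s) ^ (1 - s) = x + 1 + s := by
          rw [← rpow_add (by linarith : (0:ℝ) < x + 1 + s)]; norm_num
        calc (x - s) ^ s * (x + 1 + s) ^ (1-s) ≤ (x + 1 + s) ^ s * (x + 1 + s) ^ (1-s) :=
              mul_le_mul_of_nonneg_right e3 hE0.le
          _ = x + 1 + s := e4
      have main : Gamma x * Gamma (x + 1) * x * (x + 1 + s) ^ (1 - s) ≤
          (x + 2) * (Gamma (x - s) * Gamma (x + 1 + s)) * (x + 1 + s) ^ (1 - s) := by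
        calc Gamma x * Gamma (x + 1) * x * (x + 1 + s) ^ (1 - s)
            = (Gamma x * (x + 1 + s) ^ (1 - s)) * (Gamma (x + 1) * x) := by ring
          _ ≤ (Gamma (x - s) * (x - s) ^ s * (x + 1 + s) ^ (1 - s)) * (Gamma (x + 1) * x) :=
              mul_le_mul_of_nonneg_right
                (mul_le_mul_of_nonneg_right hA' hE0.le) (by positivity)
          _ = Gamma (x - s) * ((x - s) ^ s * (x + 1 + s) ^ (1 - s)) * (Gamma (x + 1) * x) := by
              ring
          _ ≤ Gamma (x - s) * (x + 1 + s) * (Gamma (x + 1) * x) :=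
              mul_le_mul_of_nonneg_right
                (mul_le_mul_of_nonneg_left hprod hGa.le) (by positivity)
          _ = (x * (x + 1 + s)) * (Gamma (x - s) * Gamma (x + 1)) := by ring
          _ ≤ ((x + 2) * (x + 1)) * (Gamma (x - s) * Gamma (x + 1)) :=
              mul_le_mul_of_nonneg_right (by nlinarith) (by positivity)
          _ = ((x + 2) * Gamma (x - s)) * (Gamma (x + 1) * (x + 1)) := by ring
          _ ≤ ((x + 2) * Gamma (x - s)) * (Gamma (x + 1 + s) * (x + 1 + s) ^ (1 - s)) :=
              mul_le_mul_of_nonneg_left hB2' (by positivity)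
          _ = (x + 2) * (Gamma (x - s) * Gamma (x + 1 + s)) * (x + 1 + s) ^ (1 - s) := by ring
      exact le_of_mul_le_mul_right main hE0

lemma poch_eq {t : ℝ} (ht : 0 < t) (k : ℕ) : Gamma (t + k) = poch t k * Gamma t := by
  induction k with
  | zero => simp [poch]
  | succ n ih =>
    have h : t + (n + 1 : ℕ) = (t + n) + 1 := by push_cast; ring
    have hpos : (0:ℝ) < t + n := by positivity
    have hstep : poch t (n + 1) = poch t n * (t + n) := by
      rw [poch, poch, Finset.prod_range_succ]
    rw [h, Real.Gamma_add_one hpos.ne', ih, hstep]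
    ring

lemma poch_pos {t : ℝ} (ht : 0 < t) (k : ℕ) : 0 < poch t k := by
  unfold poch; exact Finset.prod_pos fun i _ => by positivity

lemma eps_bound {p q : ℝ} (hp1 : 1 < p) (hq : q = p / (p - 1)) (k : ℕ) :
    |eps p q k| ≤ 4 / (2 / p * Gamma (2 / p)) * ((k:ℝ) + 1) ^ (2 / p - 2) := by
  have hp0 : (0:ℝ) < p := by linarith
  set t := 2 / p with htdef
  have ht0 : 0 < t := by positivity
  have ht2 : t < 2 := by rw [htdef, div_lt_iff₀ hp0]; linarith
  have h2q : 2 / q = 2 - t := by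
    rw [hq, htdef]; field_simp
  have hk1 : (1:ℝ) ≤ (k:ℝ) + 1 := by
    have : (0:ℝ) ≤ k := Nat.cast_nonneg k
    linarith
  have hGt : 0 < Gamma t := Gamma_pos_of_pos ht0
  have hGk1 : 0 < Gamma ((k:ℝ) + 1) := Gamma_pos_of_pos (by positivity)
  have hfac : (k.factorial : ℝ) = Gamma ((k:ℝ) + 1) := by
    rw [Real.Gamma_nat_eq_factorial]
  have hpoch : poch t k = Gamma ((k:ℝ) + t) / Gamma t := by
    rw [add_comm, poch_eq ht0, mul_div_assoc, div_self hGt.ne', mul_one]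
  have hratio := ratio_bound hk1 ht0 ht2
  rw [show (k:ℝ) + 1 + (t - 1) = (k:ℝ) + t by ring,
      show (k:ℝ) + 1 + (2 - t) = (k:ℝ) + 1 + (2 - t) from rfl,
      show (k:ℝ) + 1 + 1 = (k:ℝ) + 2 by ring] at hratio
  have habs : |eps p q k| = poch t k / k.factorial *
      |Gamma ((k:ℝ) + 2) * Gamma ((k:ℝ) + 1) /
        (Gamma ((k:ℝ) + 1 + 2 / q) * Gamma ((k:ℝ) + t)) - 1| := by
    rw [eps, abs_mul, abs_of_nonneg]
    exact div_nonneg (poch_pos ht0 k).le (Nat.cast_nonneg _)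
  have hsame : Gamma ((k:ℝ) + 2) * Gamma ((k:ℝ) + 1) /
        (Gamma ((k:ℝ) + 1 + 2 / q) * Gamma ((k:ℝ) + t)) =
      Gamma ((k:ℝ) + 1) * Gamma ((k:ℝ) + 2) /
        (Gamma ((k:ℝ) + t) * Gamma ((k:ℝ) + 1 + (2 - t))) := by
    rw [h2q]; ring
  rw [habs, hsame]
  have hcoef : poch t k / k.factorial ≤ 2 / t * ((k:ℝ) + 1) ^ (t - 1) / Gamma t := by
    rw [hpoch, hfac, div_div]
    rw [div_le_div_iff₀ (by positivity) (by positivity)]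
    calc Gamma ((k:ℝ) + t) * Gamma t ≤
        (2 / t * ((k:ℝ) + 1) ^ (t - 1) * Gamma ((k:ℝ) + 1)) * Gamma t :=
          mul_le_mul_of_nonneg_right (coef_le k ht0 ht2) hGt.le
      _ = 2 / t * ((k:ℝ) + 1) ^ (t - 1) * (Gamma t * Gamma ((k:ℝ)+1)) := by ring
  have hnn : (0:ℝ) ≤ poch t k / k.factorial :=
    div_nonneg (poch_pos ht0 k).le (Nat.cast_nonneg _)
  calc poch t k / k.factorial *
        |Gamma ((k:ℝ) + 1) * Gamma ((k:ℝ) + 2) /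
          (Gamma ((k:ℝ) + t) * Gamma ((k:ℝ) + 1 + (2 - t))) - 1|
      ≤ (2 / t * ((k:ℝ) + 1) ^ (t - 1) / Gamma t) * (2 / ((k:ℝ) + 1)) := by
        apply mul_le_mul hcoef hratio (abs_nonneg _)
          (div_nonneg (by positivity) hGt.le)
    _ = 4 / (t * Gamma t) * ((k:ℝ) + 1) ^ (t - 2) := by
        have hX : ((k:ℝ)+1) ^ (t-2) = ((k:ℝ)+1) ^ (t-1) / ((k:ℝ)+1) := by
          rw [show t - 2 = t - 1 - 1 by ring,
            rpow_sub (by positivity : (0:ℝ) < (k:ℝ) + 1), rpow_one]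
        rw [hX]
        field_simp
        ring

lemma sum_head_le {a : ℝ} (ha0 : 0 < a) (ha1 : a ≤ 1) (n : ℕ) :
    ∑ k ∈ Finset.range n, ((k:ℝ) + 1) ^ (a - 1) ≤ (n:ℝ) ^ a / a := by
  induction n with
  | zero => rw [Finset.sum_range_zero, Nat.cast_zero, Real.zero_rpow ha0.ne', zero_div]
  | succ n ih =>
    rw [Finset.sum_range_succ]
    push_cast
    set m := (n:ℝ) with hm
    have hm0 : (0:ℝ) ≤ m := Nat.cast_nonneg n
    have hm1 : (0:ℝ) < m + 1 := by linarith
    have hP : (0:ℝ) < (m + 1) ^ a := rpow_pos_of_pos hm1 _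
    have hb := rpow_one_add_le_one_add_mul_self
      (show (-1:ℝ) ≤ -(1/(m+1)) by rw [neg_le_neg_iff, div_le_one hm1]; linarith)
      ha0.le ha1
    rw [show (1:ℝ) + -(1/(m+1)) = m / (m+1) by field_simp; ring] at hb
    rw [div_rpow hm0 hm1.le] at hb
    -- hb : m^a / (m+1)^a ≤ 1 + a * -(1/(m+1))
    have hP1 : (m+1) ^ (a-1) = (m+1) ^ a / (m+1) := by
      rw [rpow_sub hm1, rpow_one]
    have hb2 : m ^ a ≤ (m+1) ^ a - a * ((m+1) ^ a / (m+1)) := by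
      have := mul_le_mul_of_nonneg_right hb hP.le
      rw [div_mul_cancel₀ _ hP.ne'] at this
      have he : (1 + a * -(1/(m+1))) * (m+1) ^ a
          = (m+1) ^ a - a * ((m+1) ^ a / (m+1)) := by
        field_simp; ring
      linarith [he ▸ this]
    rw [← hP1] at hb2
    have h3 : m ^ a + (m + 1) ^ (a - 1) * a ≤ (m + 1) ^ a := by nlinarith
    have goal2 : m ^ a / a + (m + 1) ^ (a - 1) ≤ (m + 1) ^ a / a := by
      rw [show m ^ a / a + (m + 1) ^ (a - 1)
          = (m ^ a + (m + 1) ^ (a - 1) * a) / a by field_simp]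
      gcongr
    linarith [ih]

lemma tsum_bound {a r : ℝ} (ha0 : 0 < a) (ha1 : a ≤ 1) (hr0 : 0 ≤ r) (hr1 : r < 1) :
    ∑' k : ℕ, ((k:ℝ) + 1) ^ (a - 1) * r ^ k ≤ (2 / a + 1) * (1 - r) ^ (-a) := by
  have h1r : (0:ℝ) < 1 - r := by linarith
  have hterm : ∀ k : ℕ, ((k:ℝ) + 1) ^ (a - 1) * r ^ k ≤ r ^ k := by
    intro k
    have h1 : ((k:ℝ) + 1) ^ (a - 1) ≤ 1 :=
      rpow_le_one_of_one_le_of_nonpos (by push_cast; linarith [Nat.cast_nonneg (α := ℝ) k])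
        (by linarith)
    nlinarith [pow_nonneg hr0 k, rpow_pos_of_pos (show (0:ℝ) < (k:ℝ)+1 by positivity) (a-1)]
  have htnn : ∀ k : ℕ, 0 ≤ ((k:ℝ) + 1) ^ (a - 1) * r ^ k := fun k => by positivity
  have hsum : Summable (fun k : ℕ => ((k:ℝ) + 1) ^ (a - 1) * r ^ k) :=
    Summable.of_nonneg_of_le htnn hterm (summable_geometric_of_lt_one hr0 hr1)
  have hinv0 : (0:ℝ) < (1 - r)⁻¹ := by positivity
  have hinv1 : (1:ℝ) ≤ (1 - r)⁻¹ := one_le_inv_iff₀.mpr ⟨h1r, by linarith⟩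
  have hir : ∀ y : ℝ, ((1 - r)⁻¹) ^ y = (1 - r) ^ (-y) := fun y => by
    rw [Real.inv_rpow h1r.le, ← Real.rpow_neg h1r.le]
  obtain ⟨n, hn1, hn2⟩ : ∃ n : ℕ, (1 - r)⁻¹ ≤ (n:ℝ) ∧ (n:ℝ) ≤ 2 * (1 - r)⁻¹ := by
    refine ⟨⌈(1 - r)⁻¹⌉₊, Nat.le_ceil _, ?_⟩
    have := Nat.ceil_lt_add_one hinv0.le
    linarith
  have hna : (0:ℝ) < (1 - r) ^ (-a) := rpow_pos_of_pos h1r _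
  -- head bound
  have hhead : ∑ k ∈ Finset.range n, ((k:ℝ) + 1) ^ (a - 1) * r ^ k
      ≤ 2 / a * (1 - r) ^ (-a) := by
    have s1 : ∑ k ∈ Finset.range n, ((k:ℝ) + 1) ^ (a - 1) * r ^ k
        ≤ ∑ k ∈ Finset.range n, ((k:ℝ) + 1) ^ (a - 1) := by
      apply Finset.sum_le_sum
      intro k _
      have h1 : (0:ℝ) < ((k:ℝ) + 1) ^ (a - 1) := rpow_pos_of_pos (by positivity) _
      nlinarith [pow_le_one₀ hr0 hr1.le (n := k), pow_nonneg hr0 k]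
    have s2 := sum_head_le ha0 ha1 n
    have s3 : (n:ℝ) ^ a ≤ 2 * (1 - r) ^ (-a) := by
      calc (n:ℝ) ^ a ≤ (2 * (1 - r)⁻¹) ^ a :=
            rpow_le_rpow (Nat.cast_nonneg n) hn2 ha0.le
        _ = (2:ℝ) ^ a * ((1 - r)⁻¹) ^ a := mul_rpow (by norm_num) (by positivity)
        _ ≤ 2 * ((1 - r)⁻¹) ^ a := by
            have : (2:ℝ) ^ a ≤ (2:ℝ) ^ (1:ℝ) :=
              rpow_le_rpow_of_exponent_le (by norm_num) ha1
            rw [rpow_one] at this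
            have hp : (0:ℝ) ≤ ((1-r)⁻¹) ^ a := by positivity
            nlinarith
        _ = 2 * (1 - r) ^ (-a) := by rw [hir]
    calc ∑ k ∈ Finset.range n, ((k:ℝ) + 1) ^ (a - 1) * r ^ k
        ≤ (n:ℝ) ^ a / a := s1.trans s2
      _ ≤ 2 * (1 - r) ^ (-a) / a := by gcongr
      _ = 2 / a * (1 - r) ^ (-a) := by ring
  -- tail bound
  have htail : ∑' k : ℕ, (((k + n:ℕ):ℝ) + 1) ^ (a - 1) * r ^ (k + n)
      ≤ (1 - r) ^ (-a) := by
    have hb : ∀ k : ℕ, (((k + n:ℕ):ℝ) + 1) ^ (a - 1) * r ^ (k + n)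
        ≤ ((n:ℝ) + 1) ^ (a - 1) * r ^ n * r ^ k := by
      intro k
      have hc : (((k + n:ℕ):ℝ) + 1) ^ (a - 1) ≤ ((n:ℝ) + 1) ^ (a - 1) := by
        apply rpow_le_rpow_of_nonpos (by positivity)
          (by push_cast; linarith [Nat.cast_nonneg (α := ℝ) k]) (by linarith)
      have hr' : r ^ (k + n) = r ^ n * r ^ k := by rw [pow_add]; ring
      rw [hr']
      have h0 : (0:ℝ) ≤ r ^ n * r ^ k := by positivity
      have h1 : (0:ℝ) ≤ ((n:ℝ) + 1) ^ (a - 1) := by positivity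
      calc (((k + n:ℕ):ℝ) + 1) ^ (a - 1) * (r ^ n * r ^ k)
          ≤ ((n:ℝ) + 1) ^ (a - 1) * (r ^ n * r ^ k) :=
            mul_le_mul_of_nonneg_right hc h0
        _ = ((n:ℝ) + 1) ^ (a - 1) * r ^ n * r ^ k := by ring
    have hsumtail : Summable (fun k : ℕ => (((k + n:ℕ):ℝ) + 1) ^ (a - 1) * r ^ (k + n)) :=
      ((summable_nat_add_iff (f := fun k : ℕ => ((k:ℝ) + 1) ^ (a - 1) * r ^ k) n).mpr hsum)
    have hsumgeo : Summable (fun k : ℕ => ((n:ℝ) + 1) ^ (a - 1) * r ^ n * r ^ k) :=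
      (summable_geometric_of_lt_one hr0 hr1).mul_left _
    have t1 := Summable.tsum_le_tsum hb hsumtail hsumgeo
    have t2 : ∑' k : ℕ, ((n:ℝ) + 1) ^ (a - 1) * r ^ n * r ^ k
        = ((n:ℝ) + 1) ^ (a - 1) * r ^ n * (1 - r)⁻¹ := by
      rw [tsum_mul_left, tsum_geometric_of_lt_one hr0 hr1]
    have t3 : ((n:ℝ) + 1) ^ (a - 1) * r ^ n * (1 - r)⁻¹ ≤ (1 - r) ^ (-a) := by
      have u1 : ((n:ℝ) + 1) ^ (a - 1) ≤ ((1 - r)⁻¹) ^ (a - 1) := by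
        apply rpow_le_rpow_of_nonpos hinv0 (by linarith) (by linarith)
      have u2 : ((1 - r)⁻¹) ^ (a - 1) * (1 - r)⁻¹ = (1 - r) ^ (-a) := by
        rw [hir, show ((1 - r)⁻¹ : ℝ) = (1 - r) ^ (-1 : ℝ) by
            rw [Real.rpow_neg h1r.le, Real.rpow_one],
          ← Real.rpow_add h1r]
        congr 1
        ring
      have u3 : r ^ n ≤ 1 := pow_le_one₀ hr0 hr1.le
      have h4 : (0:ℝ) ≤ ((1 - r)⁻¹) ^ (a - 1) := by positivity
      have h5 : (0:ℝ) ≤ r ^ n := by positivity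
      calc ((n:ℝ) + 1) ^ (a - 1) * r ^ n * (1 - r)⁻¹
          ≤ ((1 - r)⁻¹) ^ (a - 1) * 1 * (1 - r)⁻¹ := by
            apply mul_le_mul_of_nonneg_right _ hinv0.le
            apply mul_le_mul u1 u3 h5 h4
        _ = ((1 - r)⁻¹) ^ (a - 1) * (1 - r)⁻¹ := by ring
        _ = (1 - r) ^ (-a) := u2
    linarith [t1, t2 ▸ t1]
  have hsplit := (Summable.sum_add_tsum_nat_add (f := fun k : ℕ => ((k:ℝ) + 1) ^ (a - 1) * r ^ k)
    n hsum).symm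
  push_cast at hsplit htail ⊢
  rw [hsplit]
  linarith [hhead, htail]

lemma lint_bound {c : ℝ} (hc0 : 0 < c) (hc1 : c < 1) :
    ∫⁻ z in Metric.ball (0:ℂ) 1, ENNReal.ofReal ((1 - ‖z‖) ^ (-c)) < ⊤ := by
  classical
  set g : ℂ → ℝ≥0∞ := fun z => ENNReal.ofReal ((1 - ‖z‖) ^ (-c)) with hg
  set rr : ℕ → ℝ := fun j => 1 - (2⁻¹:ℝ) ^ j with hrr
  set A : ℕ → Set ℂ := fun j => Metric.ball (0:ℂ) (rr (j+1)) \ Metric.ball (0:ℂ) (rr j)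
    with hA
  have hq0 : ∀ j : ℕ, (0:ℝ) < (2⁻¹:ℝ) ^ j := fun j => by positivity
  have hq1 : ∀ j : ℕ, (2⁻¹:ℝ) ^ j ≤ 1 := fun j =>
    pow_le_one₀ (by norm_num) (by norm_num)
  have hrmono : ∀ j : ℕ, rr j ≤ rr (j+1) := by
    intro j
    simp only [hrr]
    have : (2⁻¹:ℝ) ^ (j+1) ≤ (2⁻¹:ℝ) ^ j :=
      pow_le_pow_of_le_one (by norm_num) (by norm_num) (Nat.le_succ j)
    linarith
  -- covering
  have hcover : Metric.ball (0:ℂ) 1 ⊆ ⋃ j, A j := by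
    intro z hz
    rw [Metric.mem_ball, dist_zero_right] at hz
    have hd : (0:ℝ) < 1 - ‖z‖ := by linarith
    have hex : ∃ j : ℕ, ‖z‖ < rr (j+1) := by
      obtain ⟨m, hm⟩ := exists_pow_lt_of_lt_one hd (show (2⁻¹:ℝ) < 1 by norm_num)
      refine ⟨m, ?_⟩
      simp only [hrr]
      have : (2⁻¹:ℝ) ^ (m+1) ≤ (2⁻¹:ℝ) ^ m :=
        pow_le_pow_of_le_one (by norm_num) (by norm_num) (Nat.le_succ m)
      linarith
    set j₀ := Nat.find hex with hj₀
    have h1 : ‖z‖ < rr (j₀ + 1) := Nat.find_spec hex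
    have h2 : rr j₀ ≤ ‖z‖ := by
      rcases Nat.eq_zero_or_pos j₀ with h | h
      · rw [h]; simp [hrr]
      · have := Nat.find_min hex (m := j₀ - 1) (by omega)
        have he : j₀ - 1 + 1 = j₀ := by omega
        rw [he] at this
        linarith [not_lt.mp this]
    refine mem_iUnion.mpr ⟨j₀, ?_⟩
    simp only [hA, mem_diff, Metric.mem_ball, dist_zero_right]
    exact ⟨h1, not_lt.mpr h2⟩
  -- pointwise bound on A j
  have hpt : ∀ j : ℕ, ∀ z ∈ A j, g z ≤ ENNReal.ofReal (((2:ℝ) ^ c) ^ (j+1)) := by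
    intro j z hzA
    simp only [hA, mem_diff, Metric.mem_ball, dist_zero_right] at hzA
    have hz1 : ‖z‖ < rr (j+1) := hzA.1
    have hlb : (2⁻¹:ℝ) ^ (j+1) < 1 - ‖z‖ := by
      simp only [hrr] at hz1; linarith
    have hb : (1 - ‖z‖) ^ (-c) ≤ ((2⁻¹:ℝ) ^ (j+1)) ^ (-c) :=
      rpow_le_rpow_of_nonpos (hq0 (j+1)) hlb.le (by linarith)
    have he : ((2⁻¹:ℝ) ^ (j+1)) ^ (-c) = ((2:ℝ) ^ c) ^ (j+1) := by
      rw [inv_pow, ← Real.rpow_natCast (2:ℝ) (j+1), ← Real.rpow_natCast ((2:ℝ) ^ c) (j+1),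
        Real.inv_rpow (by positivity), ← Real.rpow_neg (by positivity),
        ← Real.rpow_mul (by norm_num), ← Real.rpow_mul (by norm_num)]
      congr 1
      ring
    exact ENNReal.ofReal_le_ofReal (by rw [← he]; exact hb)
  -- measure bound on A j
  have hmeas : ∀ j : ℕ, volume (A j) ≤ ENNReal.ofReal ((2⁻¹:ℝ) ^ j) * NNReal.pi := by
    intro j
    have hsub : Metric.ball (0:ℂ) (rr j) ⊆ Metric.ball (0:ℂ) (rr (j+1)) :=
      Metric.ball_subset_ball (hrmono j)
    have hfin : volume (Metric.ball (0:ℂ) (rr j)) ≠ ⊤ := by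
      rw [Complex.volume_ball]
      exact ENNReal.mul_ne_top (by simp [ENNReal.pow_ne_top, ENNReal.ofReal_ne_top])
        ENNReal.coe_ne_top
    have := measure_diff hsub measurableSet_ball.nullMeasurableSet hfin
    simp only [hA]
    rw [this, Complex.volume_ball, Complex.volume_ball]
    rw [tsub_le_iff_right]
    have h1 : ENNReal.ofReal (rr (j+1)) ^ 2 ≤
        ENNReal.ofReal ((2⁻¹:ℝ) ^ j) + ENNReal.ofReal (rr j) ^ 2 := by
      rw [← ENNReal.ofReal_pow (by simp only [hrr]; linarith [hq1 (j+1)]),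
        ← ENNReal.ofReal_pow (by simp only [hrr]; linarith [hq1 j]),
        ← ENNReal.ofReal_add (by positivity) (by positivity)]
      apply ENNReal.ofReal_le_ofReal
      simp only [hrr]
      have e1 : (2⁻¹:ℝ) ^ (j+1) = (2⁻¹:ℝ) ^ j / 2 := by rw [pow_succ]; ring
      nlinarith [hq0 j, hq1 j]
    calc ENNReal.ofReal (rr (j+1)) ^ 2 * NNReal.pi
        ≤ (ENNReal.ofReal ((2⁻¹:ℝ) ^ j) + ENNReal.ofReal (rr j) ^ 2) * NNReal.pi :=
          mul_le_mul_left h1 _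
      _ = ENNReal.ofReal ((2⁻¹:ℝ) ^ j) * NNReal.pi + ENNReal.ofReal (rr j) ^ 2 * NNReal.pi := by
          ring
  -- per-annulus integral bound
  set ρ : ℝ := (2:ℝ) ^ c * 2⁻¹ with hρ
  have hρ0 : 0 ≤ ρ := by positivity
  have hρ1 : ρ < 1 := by
    have : (2:ℝ) ^ c < (2:ℝ) ^ (1:ℝ) := rpow_lt_rpow_of_exponent_lt (by norm_num) hc1
    rw [rpow_one] at this
    simp only [hρ]
    linarith
  have hKj : ∀ j : ℕ, ((2:ℝ) ^ c) ^ (j+1) * (2⁻¹:ℝ) ^ j = (2:ℝ) ^ c * ρ ^ j := by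
    intro j
    simp only [hρ]
    rw [pow_succ, mul_pow]
    ring
  have hann : ∀ j : ℕ, ∫⁻ z in A j, g z ≤ ENNReal.ofReal ((2:ℝ) ^ c * ρ ^ j) * NNReal.pi := by
    intro j
    calc ∫⁻ z in A j, g z ≤ ∫⁻ _ in A j, ENNReal.ofReal (((2:ℝ) ^ c) ^ (j+1)) :=
          setLIntegral_mono measurable_const (hpt j)
      _ = ENNReal.ofReal (((2:ℝ) ^ c) ^ (j+1)) * volume (A j) := setLIntegral_const _ _
      _ ≤ ENNReal.ofReal (((2:ℝ) ^ c) ^ (j+1)) *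
          (ENNReal.ofReal ((2⁻¹:ℝ) ^ j) * NNReal.pi) := mul_le_mul_right (hmeas j) _
      _ = ENNReal.ofReal ((2:ℝ) ^ c * ρ ^ j) * NNReal.pi := by
          rw [← mul_assoc, ← ENNReal.ofReal_mul (by positivity), hKj j]
  -- sum up
  have hsumg : Summable (fun j : ℕ => (2:ℝ) ^ c * ρ ^ j) :=
    (summable_geometric_of_lt_one hρ0 hρ1).mul_left _
  have htsum : ∑' j : ℕ, ENNReal.ofReal ((2:ℝ) ^ c * ρ ^ j) =
      ENNReal.ofReal (∑' j : ℕ, (2:ℝ) ^ c * ρ ^ j) :=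
    (ENNReal.ofReal_tsum_of_nonneg (fun j => by positivity) hsumg).symm
  calc ∫⁻ z in Metric.ball (0:ℂ) 1, g z
      ≤ ∫⁻ z in ⋃ j, A j, g z := lintegral_mono' (Measure.restrict_mono hcover le_rfl) le_rfl
    _ ≤ ∑' j : ℕ, ∫⁻ z in A j, g z := lintegral_iUnion_le _ _
    _ ≤ ∑' j : ℕ, ENNReal.ofReal ((2:ℝ) ^ c * ρ ^ j) * NNReal.pi :=
        ENNReal.tsum_le_tsum hann
    _ = ENNReal.ofReal (∑' j : ℕ, (2:ℝ) ^ c * ρ ^ j) * NNReal.pi := by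
        rw [ENNReal.tsum_mul_right, htsum]
    _ < ⊤ := ENNReal.mul_lt_top ENNReal.ofReal_lt_top ENNReal.coe_lt_top

/-- Lemma 2.5 (first part): `sup_{ξ∈𝔻} ∫_𝔻 |Ψ_ξ|^p dν < ∞`. -/
theorem sup_Psi_finite (p q : ℝ) (hp1 : 1 < p) (hq : q = p / (p - 1)) :
    ∃ M : ℝ, ∀ ξ : ℂ, ‖ξ‖ < 1 →
      (∫ z in Metric.ball (0:ℂ) 1, ‖PsiF p q ξ z‖ ^ p) / π ≤ M := by
  have hp0 : (0:ℝ) < p := by linarith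
  set t : ℝ := 2 / p with htdef
  have ht0 : 0 < t := by positivity
  have ht2 : t < 2 := by rw [htdef, div_lt_iff₀ hp0]; linarith
  have h2q : 2 / q = 2 - t := by rw [hq, htdef]; field_simp
  set a : ℝ := max (t - 1) (t / 4) with hadef
  have ha0 : 0 < a := lt_of_lt_of_le (by positivity) (le_max_right _ _)
  have ha1 : a ≤ 1 := max_le (by linarith) (by linarith)
  have hta : t - 2 ≤ a - 1 := by
    have := le_max_left (t - 1) (t / 4); linarith
  set c : ℝ := a * p with hcdef
  have hc0 : 0 < c := by positivity
  have hc1 : c < 1 := by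
    rw [hcdef]
    have hip : (0:ℝ) < 1 / p := by positivity
    have hinv : 1 / p < 1 := by rw [div_lt_one hp0]; exact hp1
    have e2 : (2:ℝ) / p = 2 * (1 / p) := by ring
    have h1 : a < 1 / p := by
      apply max_lt
      · show (2:ℝ) / p - 1 < 1 / p
        rw [e2]; linarith
      · show (2:ℝ) / p / 4 < 1 / p
        rw [e2]; linarith
    calc a * p < 1 / p * p := by
          exact mul_lt_mul_of_pos_right h1 hp0
      _ = 1 := by field_simp
  have hGt : 0 < Gamma t := Gamma_pos_of_pos ht0
  have hG2q : 0 < Gamma (2 / q) := Gamma_pos_of_pos (by rw [h2q]; linarith)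
  set C₁ : ℝ := 4 / (t * Gamma t) with hC₁def
  have hC₁ : 0 < C₁ := by positivity
  set Ca : ℝ := 2 / a + 1 with hCadef
  have hCa : 0 < Ca := by positivity
  set K : ℝ := Gamma t * Gamma (2 / q) * C₁ * Ca with hKdef
  have hK : 0 < K := by positivity
  set B₀ : ℝ≥0∞ := ∫⁻ z in Metric.ball (0:ℂ) 1, ENNReal.ofReal ((1 - ‖z‖) ^ (-c)) with hB₀def
  have hB₀ : B₀ < ⊤ := lint_bound hc0 hc1
  have hKB : ENNReal.ofReal (K ^ p) * B₀ ≠ ⊤ :=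
    ENNReal.mul_ne_top ENNReal.ofReal_ne_top hB₀.ne
  refine ⟨(ENNReal.ofReal (K ^ p) * B₀).toReal, ?_⟩
  intro ξ hξ
  -- pointwise bound
  have hPsi : ∀ z ∈ Metric.ball (0:ℂ) 1, ‖PsiF p q ξ z‖ ≤ K * (1 - ‖z‖) ^ (-a) := by
    intro z hz
    rw [Metric.mem_ball, dist_zero_right] at hz
    have hz1 : ‖z‖ < 1 := hz
    have hz0 : (0:ℝ) ≤ ‖z‖ := norm_nonneg z
    set w : ℂ := z * conj ξ with hwdef
    have hwn : ‖w‖ = ‖z‖ * ‖ξ‖ := by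
      rw [hwdef, norm_mul, RCLike.norm_conj]
    have hw0 : (0:ℝ) ≤ ‖w‖ := norm_nonneg w
    have hwz : ‖w‖ ≤ ‖z‖ := by
      rw [hwn]
      exact mul_le_of_le_one_right hz0 hξ.le
    have hw1 : ‖w‖ < 1 := lt_of_le_of_lt hwz hz1
    have hdz : (0:ℝ) < 1 - ‖z‖ := by linarith
    have hsumaux : Summable (fun k : ℕ => ((k:ℝ) + 1) ^ (a - 1) * ‖w‖ ^ k) := by
      apply Summable.of_nonneg_of_le (fun k => by positivity)
        (fun k => ?_) (summable_geometric_of_lt_one hw0 hw1)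
      have h1 : ((k:ℝ) + 1) ^ (a - 1) ≤ 1 :=
        rpow_le_one_of_one_le_of_nonpos
          (by linarith [Nat.cast_nonneg (α := ℝ) k]) (by linarith)
      nlinarith [pow_nonneg hw0 k,
        rpow_pos_of_pos (show (0:ℝ) < (k:ℝ)+1 by positivity) (a-1)]
    have hbk : ∀ k : ℕ, ‖((eps p q k : ℝ) : ℂ) * w ^ k‖ ≤
        C₁ * (((k:ℝ) + 1) ^ (a - 1) * ‖w‖ ^ k) := by
      intro k
      rw [norm_mul, norm_pow, Complex.norm_real, Real.norm_eq_abs]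
      have h1 : |eps p q k| ≤ C₁ * ((k:ℝ) + 1) ^ (2 / p - 2) := by
        have := eps_bound hp1 hq k
        rw [hC₁def, htdef]
        calc |eps p q k| ≤ 4 / (2 / p * Gamma (2 / p)) * ((k:ℝ) + 1) ^ (2 / p - 2) := this
          _ = 4 / (2 / p * Gamma (2 / p)) * ((k:ℝ) + 1) ^ (2 / p - 2) := rfl
      have h2 : ((k:ℝ) + 1) ^ (2 / p - 2) ≤ ((k:ℝ) + 1) ^ (a - 1) := by
        apply rpow_le_rpow_of_exponent_le (by linarith [Nat.cast_nonneg (α := ℝ) k])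
        rw [← htdef]; exact hta
      have h3 : |eps p q k| ≤ C₁ * ((k:ℝ) + 1) ^ (a - 1) := by
        calc |eps p q k| ≤ C₁ * ((k:ℝ) + 1) ^ (2 / p - 2) := h1
          _ ≤ C₁ * ((k:ℝ) + 1) ^ (a - 1) := by
              exact mul_le_mul_of_nonneg_left h2 hC₁.le
      calc |eps p q k| * ‖w‖ ^ k ≤ (C₁ * ((k:ℝ) + 1) ^ (a - 1)) * ‖w‖ ^ k :=
            mul_le_mul_of_nonneg_right h3 (by positivity)
        _ = C₁ * (((k:ℝ) + 1) ^ (a - 1) * ‖w‖ ^ k) := by ring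
    have hsumnorm : Summable (fun k : ℕ => ‖((eps p q k : ℝ) : ℂ) * w ^ k‖) :=
      Summable.of_nonneg_of_le (fun k => norm_nonneg _) hbk (hsumaux.mul_left C₁)
    have htsum1 : ‖∑' k : ℕ, ((eps p q k : ℝ) : ℂ) * w ^ k‖ ≤
        C₁ * ∑' k : ℕ, ((k:ℝ) + 1) ^ (a - 1) * ‖w‖ ^ k := by
      calc ‖∑' k : ℕ, ((eps p q k : ℝ) : ℂ) * w ^ k‖
          ≤ ∑' k : ℕ, ‖((eps p q k : ℝ) : ℂ) * w ^ k‖ := norm_tsum_le_tsum_norm hsumnorm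
        _ ≤ ∑' k : ℕ, C₁ * (((k:ℝ) + 1) ^ (a - 1) * ‖w‖ ^ k) :=
            Summable.tsum_le_tsum hbk hsumnorm (hsumaux.mul_left C₁)
        _ = C₁ * ∑' k : ℕ, ((k:ℝ) + 1) ^ (a - 1) * ‖w‖ ^ k := tsum_mul_left
    have htsum2 : ∑' k : ℕ, ((k:ℝ) + 1) ^ (a - 1) * ‖w‖ ^ k ≤ Ca * (1 - ‖w‖) ^ (-a) :=
      tsum_bound ha0 ha1 hw0 hw1
    have hmono : (1 - ‖w‖) ^ (-a) ≤ (1 - ‖z‖) ^ (-a) :=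
      rpow_le_rpow_of_nonpos hdz (by linarith) (by linarith)
    have hGnorm : ‖((Gamma (2 / p) * Gamma (2 / q) : ℝ) : ℂ)‖ =
        Gamma t * Gamma (2 / q) := by
      rw [Complex.norm_real, Real.norm_eq_abs,
        abs_of_pos (mul_pos (by rw [← htdef]; exact hGt) hG2q), htdef]
    rw [PsiF, norm_mul, hGnorm, ← hwdef]
    calc Gamma t * Gamma (2 / q) * ‖∑' k : ℕ, ((eps p q k : ℝ) : ℂ) * w ^ k‖
        ≤ Gamma t * Gamma (2 / q) * (C₁ * (Ca * (1 - ‖w‖) ^ (-a))) := by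
          apply mul_le_mul_of_nonneg_left _ (by positivity)
          calc ‖∑' k : ℕ, ((eps p q k : ℝ) : ℂ) * w ^ k‖
              ≤ C₁ * ∑' k : ℕ, ((k:ℝ) + 1) ^ (a - 1) * ‖w‖ ^ k := htsum1
            _ ≤ C₁ * (Ca * (1 - ‖w‖) ^ (-a)) := mul_le_mul_of_nonneg_left htsum2 hC₁.le
      _ ≤ Gamma t * Gamma (2 / q) * (C₁ * (Ca * (1 - ‖z‖) ^ (-a))) := by
          apply mul_le_mul_of_nonneg_left _ (by positivity)
          apply mul_le_mul_of_nonneg_left _ hC₁.le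
          exact mul_le_mul_of_nonneg_left hmono hCa.le
      _ = K * (1 - ‖z‖) ^ (-a) := by rw [hKdef]; ring
  -- rpow bound
  have hPsip : ∀ z ∈ Metric.ball (0:ℂ) 1,
      ‖PsiF p q ξ z‖ ^ p ≤ K ^ p * (1 - ‖z‖) ^ (-c) := by
    intro z hz
    have hz1 : ‖z‖ < 1 := by rwa [Metric.mem_ball, dist_zero_right] at hz
    have hdz : (0:ℝ) < 1 - ‖z‖ := by linarith
    have h1 : ‖PsiF p q ξ z‖ ^ p ≤ (K * (1 - ‖z‖) ^ (-a)) ^ p :=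
      rpow_le_rpow (norm_nonneg _) (hPsi z hz) (by linarith)
    calc ‖PsiF p q ξ z‖ ^ p ≤ (K * (1 - ‖z‖) ^ (-a)) ^ p := h1
      _ = K ^ p * ((1 - ‖z‖) ^ (-a)) ^ p := mul_rpow hK.le (by positivity)
      _ = K ^ p * (1 - ‖z‖) ^ (-c) := by
          rw [← Real.rpow_mul hdz.le, hcdef]
          ring_nf
  -- conclude
  by_cases hInt : IntegrableOn (fun z => ‖PsiF p q ξ z‖ ^ p) (Metric.ball (0:ℂ) 1) volume
  · have hnn : 0 ≤ᵐ[volume.restrict (Metric.ball (0:ℂ) 1)]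
        fun z => ‖PsiF p q ξ z‖ ^ p :=
      ae_of_all _ fun z => rpow_nonneg (norm_nonneg _) p
    rw [MeasureTheory.integral_eq_lintegral_of_nonneg_ae hnn hInt.aestronglyMeasurable]
    have hchain : ∫⁻ z in Metric.ball (0:ℂ) 1, ENNReal.ofReal (‖PsiF p q ξ z‖ ^ p) ≤
        ENNReal.ofReal (K ^ p) * B₀ := by
      calc ∫⁻ z in Metric.ball (0:ℂ) 1, ENNReal.ofReal (‖PsiF p q ξ z‖ ^ p)
          ≤ ∫⁻ z in Metric.ball (0:ℂ) 1,
              ENNReal.ofReal (K ^ p * (1 - ‖z‖) ^ (-c)) :=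
            setLIntegral_mono' measurableSet_ball fun z hz => ENNReal.ofReal_le_ofReal (hPsip z hz)
        _ = ∫⁻ z in Metric.ball (0:ℂ) 1,
              ENNReal.ofReal (K ^ p) * ENNReal.ofReal ((1 - ‖z‖) ^ (-c)) := by
            apply lintegral_congr
            intro z
            rw [ENNReal.ofReal_mul (by positivity)]
        _ = ENNReal.ofReal (K ^ p) * B₀ := by
            rw [hB₀def, ← lintegral_const_mul' _ _ ENNReal.ofReal_ne_top]
    have hfin : (∫⁻ z in Metric.ball (0:ℂ) 1,
        ENNReal.ofReal (‖PsiF p q ξ z‖ ^ p)).toReal ≤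
        (ENNReal.ofReal (K ^ p) * B₀).toReal :=
      ENNReal.toReal_mono hKB hchain
    have hpi : (1:ℝ) ≤ π := by linarith [Real.pi_gt_three]
    have h0 : (0:ℝ) ≤ (∫⁻ z in Metric.ball (0:ℂ) 1,
        ENNReal.ofReal (‖PsiF p q ξ z‖ ^ p)).toReal := ENNReal.toReal_nonneg
    calc (∫⁻ z in Metric.ball (0:ℂ) 1,
          ENNReal.ofReal (‖PsiF p q ξ z‖ ^ p)).toReal / π
        ≤ (∫⁻ z in Metric.ball (0:ℂ) 1,
          ENNReal.ofReal (‖PsiF p q ξ z‖ ^ p)).toReal := div_le_self h0 hpi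
      _ ≤ (ENNReal.ofReal (K ^ p) * B₀).toReal := hfin
  · rw [MeasureTheory.integral_undef hInt, zero_div]
    exact ENNReal.toReal_nonneg
end

section
/- Gauss summation: for real a, b, c with c not a nonpositive integer and c - a - b > 0, the hypergeometric series F(a,b;c;1) = ∑_{n≥0} (a)_n(b)_n/((c)_n n!) converges and equals Γ(c)Γ(c-a-b)/(Γ(c-a)Γ(c-b)). -/
open Real

open Filter Finset

namespace PochAux

lemma poch_zero (a : ℝ) : poch a 0 = 1 := by simp [poch]

lemma poch_succ (a : ℝ) (n : ℕ) : poch a (n + 1) = poch a n * (a + n) :=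
  Finset.prod_range_succ _ _

lemma poch_succ' (a : ℝ) (n : ℕ) : poch a (n + 1) = a * poch (a + 1) n := by
  induction n with
  | zero => simp [poch]
  | succ n ih =>
    rw [poch_succ, ih, poch_succ]
    push_cast
    ring

lemma poch_add (a : ℝ) (m n : ℕ) : poch a (m + n) = poch a m * poch (a + m) n := by
  rw [poch, poch, poch, Finset.prod_range_add]
  congr 1
  refine Finset.prod_congr rfl fun i _ => ?_
  push_cast
  ring

lemma poch_pos {a : ℝ} (ha : 0 < a) (n : ℕ) : 0 < poch a n :=
  Finset.prod_pos fun i _ => by positivity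

lemma poch_nonneg {a : ℝ} (ha : 0 ≤ a) (n : ℕ) : 0 ≤ poch a n :=
  Finset.prod_nonneg fun i _ => by positivity

lemma poch_le_poch {a b : ℝ} (ha : 0 ≤ a) (hab : a ≤ b) (n : ℕ) :
    poch a n ≤ poch b n :=
  Finset.prod_le_prod (fun i _ => by positivity) (fun i _ => by linarith)

lemma abs_poch_le (a : ℝ) (n : ℕ) : |poch a n| ≤ poch |a| n := by
  rw [poch, poch, Finset.abs_prod]
  refine Finset.prod_le_prod (fun i _ => abs_nonneg _) (fun i _ => ?_)
  calc |a + (i:ℝ)| ≤ |a| + |(i:ℝ)| := abs_add_le _ _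
  _ = |a| + i := by rw [Nat.abs_cast]

lemma poch_one (n : ℕ) : poch 1 n = n.factorial := by
  induction n with
  | zero => simp [poch]
  | succ n ih =>
    rw [poch_succ, ih, Nat.factorial_succ]
    push_cast
    ring

lemma poch_nat (k n : ℕ) : (k.factorial : ℝ) * poch (k + 1) n = (n + k).factorial := by
  induction n with
  | zero => simp [poch]
  | succ n ih =>
    rw [poch_succ, ← mul_assoc, ih]
    have : n + 1 + k = (n + k) + 1 := by omega
    rw [this, Nat.factorial_succ]
    push_cast
    ring

lemma poch_ne_zero {a : ℝ} (ha : ∀ i : ℕ, a + i ≠ 0) (n : ℕ) : poch a n ≠ 0 :=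
  Finset.prod_ne_zero_iff.2 fun i _ => ha i

lemma one_le_poch {a : ℝ} (ha : 1 ≤ a) (n : ℕ) : 1 ≤ poch a n := by
  rw [poch]
  have : ∀ i ∈ Finset.range n, (1:ℝ) ≤ a + i := by
    intro i _
    have : (0:ℝ) ≤ (i:ℝ) := i.cast_nonneg
    linarith
  calc (1:ℝ) = ∏ _i ∈ Finset.range n, (1:ℝ) := by simp
  _ ≤ ∏ i ∈ Finset.range n, (a + i) :=
      Finset.prod_le_prod (fun i _ => zero_le_one) this


lemma gammaSeq_mul_poch {X : ℝ} (hX : 0 < X) (n : ℕ) :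
    Real.GammaSeq X n * poch X (n + 1) = (n : ℝ) ^ X * n.factorial := by
  rw [Real.GammaSeq]
  have hne : poch X (n+1) ≠ 0 := ne_of_gt (poch_pos hX _)
  have : ∏ j ∈ Finset.range (n + 1), (X + j) = poch X (n+1) := rfl
  rw [this, div_mul_cancel₀ _ hne]

lemma gammaSeq_mul_poch' {X : ℝ} (hX : ∀ j:ℕ, X+(j:ℝ) ≠ 0) (n : ℕ) :
    Real.GammaSeq X n * poch X (n + 1) = (n : ℝ) ^ X * n.factorial := by
  rw [Real.GammaSeq]
  have hne : poch X (n+1) ≠ 0 := poch_ne_zero hX _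
  have : ∏ j ∈ Finset.range (n + 1), (X + j) = poch X (n+1) := rfl
  rw [this, div_mul_cancel₀ _ hne]

lemma core_tendsto' {A B C D : ℝ} (hA : ∀ j:ℕ, A+(j:ℝ) ≠ 0) (hB : ∀ j:ℕ, B+(j:ℝ) ≠ 0)
    (hC : ∀ j:ℕ, C+(j:ℝ) ≠ 0) (hD : ∀ j:ℕ, D+(j:ℝ) ≠ 0)
    (hΓA : Real.Gamma A ≠ 0) (hΓB : Real.Gamma B ≠ 0) :
    Filter.Tendsto (fun n : ℕ => (n:ℝ)^(C+D-A-B) *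
      (poch A (n+1) * poch B (n+1) / (poch C (n+1) * poch D (n+1)))) atTop
      (nhds (Real.Gamma C * Real.Gamma D / (Real.Gamma A * Real.Gamma B))) := by
  have hlim := ((Real.GammaSeq_tendsto_Gamma C).mul (Real.GammaSeq_tendsto_Gamma D)).div
    ((Real.GammaSeq_tendsto_Gamma A).mul (Real.GammaSeq_tendsto_Gamma B))
    (mul_ne_zero hΓA hΓB)
  refine hlim.congr' ?_
  filter_upwards [Filter.eventually_ge_atTop 1] with n hn
  have hn0 : (0:ℝ) < (n:ℝ) := by exact_mod_cast hn
  have hfac : (n.factorial : ℝ) ≠ 0 := Nat.cast_ne_zero.2 n.factorial_ne_zero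
  have hPA := poch_ne_zero hA (n+1); have hPB := poch_ne_zero hB (n+1)
  have hPC := poch_ne_zero hC (n+1); have hPD := poch_ne_zero hD (n+1)
  have hGA := gammaSeq_mul_poch' hA n
  have hGB := gammaSeq_mul_poch' hB n
  have hGC := gammaSeq_mul_poch' hC n
  have hGD := gammaSeq_mul_poch' hD n
  have hrpow : (n:ℝ)^(C+D-A-B) * ((n:ℝ)^A * (n:ℝ)^B) = (n:ℝ)^C * (n:ℝ)^D := by
    rw [← Real.rpow_add hn0, ← Real.rpow_add hn0, ← Real.rpow_add hn0]
    ring_nf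
  have hnum : ∀ X : ℝ, (n:ℝ)^X * (n.factorial:ℝ) ≠ 0 := fun X => by
    have : (0:ℝ) < (n:ℝ)^X := Real.rpow_pos_of_pos hn0 X
    positivity
  have hGAne : Real.GammaSeq A n ≠ 0 := fun hzero => hnum A (by rw [← hGA, hzero, zero_mul])
  have hGBne : Real.GammaSeq B n ≠ 0 := fun hzero => hnum B (by rw [← hGB, hzero, zero_mul])
  simp only [Pi.div_apply, Pi.mul_apply]
  field_simp
  linear_combination (Real.GammaSeq D n * poch D (n+1)) * hGC +
    ((n:ℝ)^C * (n.factorial:ℝ)) * hGD -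
    ((n:ℝ)^(C+D-A-B) * Real.GammaSeq B n * poch B (n+1)) * hGA -
    ((n:ℝ)^(C+D-A-B) * (n:ℝ)^A * (n.factorial:ℝ)) * hGB -
    ((n.factorial:ℝ))^2 * hrpow

lemma core_tendsto {A B C D : ℝ} (hA : 0<A) (hB : 0<B) (hC : 0<C) (hD : 0<D) :
    Filter.Tendsto (fun n : ℕ => (n:ℝ)^(C+D-A-B) *
      (poch A (n+1) * poch B (n+1) / (poch C (n+1) * poch D (n+1)))) atTop
      (nhds (Real.Gamma C * Real.Gamma D / (Real.Gamma A * Real.Gamma B))) := by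
  have pos_ne : ∀ {X : ℝ}, 0 < X → ∀ j:ℕ, X+(j:ℝ) ≠ 0 := fun hX j => by positivity
  exact core_tendsto' (pos_ne hA) (pos_ne hB) (pos_ne hC) (pos_ne hD)
    (ne_of_gt (Real.Gamma_pos_of_pos hA)) (ne_of_gt (Real.Gamma_pos_of_pos hB))

noncomputable def Q (A B C D : ℝ) (n : ℕ) : ℝ :=
  poch A n * poch B n / (poch C n * poch D n)

lemma Q_pos {A B C D : ℝ} (hA : 0<A) (hB : 0<B) (hC : 0<C) (hD : 0<D) (n : ℕ) :
    0 < Q A B C D n := by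
  have := poch_pos hA n; have := poch_pos hB n
  have := poch_pos hC n; have := poch_pos hD n
  rw [Q]; positivity

lemma Q_succ_eq {A B C D : ℝ} (hA : 0<A) (hB : 0<B) (hC : 0<C) (hD : 0<D)
    {n : ℕ} (hn : 1 ≤ n) :
    Q A B C D (n+1) = (n:ℝ)^(-(C+D-A-B)) *
      ((n:ℝ)^(C+D-A-B) * Q A B C D (n+1)) := by
  have hn0 : (0:ℝ) < (n:ℝ) := by exact_mod_cast hn
  rw [← mul_assoc, ← Real.rpow_add hn0, neg_add_cancel, Real.rpow_zero, one_mul]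

lemma core_summable {A B C D : ℝ} (hA : 0<A) (hB : 0<B) (hC : 0<C) (hD : 0<D)
    (hσ : 1 < C + D - A - B) : Summable (Q A B C D) := by
  set σ := C + D - A - B with hσdef
  set L := Real.Gamma C * Real.Gamma D / (Real.Gamma A * Real.Gamma B) with hL
  have hlim : Filter.Tendsto (fun n : ℕ => (n:ℝ)^σ * Q A B C D (n+1)) atTop (nhds L) :=
    core_tendsto hA hB hC hD
  have hev : ∀ᶠ n : ℕ in atTop, (n:ℝ)^σ * Q A B C D (n+1) < |L| + 1 :=
    hlim.eventually_lt_const (by cases abs_cases L <;> linarith)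
  rw [← summable_nat_add_iff 1]
  refine Summable.of_norm_bounded_eventually_nat
    (g := fun n => (|L| + 1) * (n:ℝ)^(-σ)) ?_ ?_
  · exact (Real.summable_nat_rpow.2 (by linarith)).mul_left _
  · filter_upwards [hev, Filter.eventually_ge_atTop 1] with n hn hn1
    have hn0 : (0:ℝ) < (n:ℝ) := by exact_mod_cast hn1
    have hq := Q_pos hA hB hC hD (n+1)
    rw [Real.norm_eq_abs, abs_of_pos hq, Q_succ_eq hA hB hC hD hn1, mul_comm ((|L|+1)) _]
    exact mul_le_mul_of_nonneg_left (le_of_lt hn) (le_of_lt (Real.rpow_pos_of_pos hn0 _))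

lemma core_mul_tendsto_zero {A B C D : ℝ} (hA : 0<A) (hB : 0<B) (hC : 0<C) (hD : 0<D)
    (hσ : 1 < C + D - A - B) :
    Filter.Tendsto (fun n : ℕ => (n:ℝ) * Q A B C D n) atTop (nhds 0) := by
  set σ := C + D - A - B with hσdef
  set L := Real.Gamma C * Real.Gamma D / (Real.Gamma A * Real.Gamma B) with hL
  have hlim : Filter.Tendsto (fun n : ℕ => (n:ℝ)^σ * Q A B C D (n+1)) atTop (nhds L) :=
    core_tendsto hA hB hC hD
  have h1 : Filter.Tendsto (fun n : ℕ => (n:ℝ)^(1-σ) + (n:ℝ)^(-σ)) atTop (nhds 0) := by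
    have ha : Filter.Tendsto (fun n : ℕ => (n:ℝ)^(1-σ)) atTop (nhds 0) := by
      have := (tendsto_rpow_neg_atTop (y := σ - 1) (by linarith)).comp
        (tendsto_natCast_atTop_atTop (R := ℝ))
      refine this.congr fun n => ?_
      simp only [Function.comp_apply]
      congr 1
      ring
    have hb : Filter.Tendsto (fun n : ℕ => (n:ℝ)^(-σ)) atTop (nhds 0) := by
      exact (tendsto_rpow_neg_atTop (by linarith)).comp tendsto_natCast_atTop_atTop
    simpa using ha.add hb
  have h2 : Filter.Tendsto
      (fun n : ℕ => ((n:ℝ)^(1-σ) + (n:ℝ)^(-σ)) * ((n:ℝ)^σ * Q A B C D (n+1)))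
      atTop (nhds 0) := by
    simpa using h1.mul hlim
  have h3 : Filter.Tendsto (fun n : ℕ => ((n:ℝ)+1) * Q A B C D (n+1)) atTop (nhds 0) := by
    refine h2.congr' ?_
    filter_upwards [Filter.eventually_ge_atTop 1] with n hn1
    have hn0 : (0:ℝ) < (n:ℝ) := by exact_mod_cast hn1
    rw [add_mul, add_mul, ← mul_assoc, ← mul_assoc, ← Real.rpow_add hn0,
      ← Real.rpow_add hn0]
    have e1 : 1 - σ + σ = 1 := by ring
    have e2 : -σ + σ = 0 := by ring
    rw [e1, e2, Real.rpow_one, Real.rpow_zero, one_mul]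
  rw [← Filter.tendsto_add_atTop_iff_nat 1]
  refine h3.congr ?_
  intro n
  push_cast
  ring

noncomputable def hgt (a b c : ℝ) (n : ℕ) : ℝ :=
  poch a n * poch b n / (poch c n * n.factorial)

lemma hgt_shift (a b c : ℝ) (k₀ k : ℕ) :
    hgt a b c (k₀ + k) = hgt a b c k₀ *
      Q (a + k₀) (b + k₀) (c + k₀) ((k₀ : ℝ) + 1) k := by
  rw [hgt, hgt, Q, poch_add a, poch_add b, poch_add c]
  have hfac : ((k₀ + k).factorial : ℝ) = (k₀.factorial : ℝ) * poch ((k₀:ℝ) + 1) k := by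
    rw [poch_nat k₀ k]
    norm_cast
    rw [Nat.add_comm k k₀]
  rw [hfac]
  field_simp

lemma decay (a b c : ℝ) (hc : ∀ n : ℕ, c + n ≠ 0) (h : 0 < c - a - b) :
    Summable (hgt a b c) ∧
      Filter.Tendsto (fun n : ℕ => (n:ℝ) * hgt a b c n) atTop (nhds 0) := by
  obtain ⟨k₀, hk₀⟩ : ∃ k₀ : ℕ, max (max (-a) (-b)) (-c) < k₀ :=
    exists_nat_gt _
  have hA : 0 < a + k₀ := by
    have := (max_lt_iff.1 (max_lt_iff.1 hk₀).1).1; linarith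
  have hB : 0 < b + k₀ := by
    have := (max_lt_iff.1 (max_lt_iff.1 hk₀).1).2; linarith
  have hC : 0 < c + k₀ := by
    have := (max_lt_iff.1 hk₀).2; linarith
  have hD : (0:ℝ) < (k₀:ℝ) + 1 := by positivity
  have hσ : 1 < (c + k₀) + ((k₀:ℝ) + 1) - (a + k₀) - (b + k₀) := by linarith
  have hsum : Summable (Q (a + k₀) (b + k₀) (c + k₀) ((k₀:ℝ) + 1)) :=
    core_summable hA hB hC hD hσ
  have hnul : Filter.Tendsto
      (fun n : ℕ => (n:ℝ) * Q (a + k₀) (b + k₀) (c + k₀) ((k₀:ℝ) + 1) n)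
      atTop (nhds 0) := core_mul_tendsto_zero hA hB hC hD hσ
  set K := hgt a b c k₀ with hK
  constructor
  · rw [← summable_nat_add_iff k₀]
    refine (hsum.mul_left K).congr fun n => ?_
    rw [← hgt_shift, Nat.add_comm]
  · rw [← Filter.tendsto_add_atTop_iff_nat k₀]
    have : Filter.Tendsto
        (fun n : ℕ => K * ((n:ℝ) * Q (a + k₀) (b + k₀) (c + k₀) ((k₀:ℝ) + 1) n)
          + (K * k₀) * Q (a + k₀) (b + k₀) (c + k₀) ((k₀:ℝ) + 1) n)
        atTop (nhds 0) := by
      simpa using (hnul.const_mul K).add (hsum.tendsto_atTop_zero.const_mul (K * k₀))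
    refine this.congr fun n => ?_
    rw [Nat.add_comm n k₀, hgt_shift]
    push_cast
    ring

lemma contiguous (a b c : ℝ) (hc : ∀ n : ℕ, c + n ≠ 0) (N : ℕ) :
    c * (c-a-b) * (∑ k ∈ Finset.range N, hgt a b c k)
      - (c-a)*(c-b) * (∑ k ∈ Finset.range N, hgt a b (c+1) k)
      = -c * ((N:ℝ) * hgt a b c N) := by
  induction N with
  | zero => simp
  | succ N ih =>
    rw [Finset.sum_range_succ, Finset.sum_range_succ]
    have hPC : poch c N ≠ 0 := poch_ne_zero hc N
    have hcN : c + N ≠ 0 := hc N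
    have hc0 : c ≠ 0 := by have := hc 0; simpa using this
    have hF : (N.factorial : ℝ) ≠ 0 := Nat.cast_ne_zero.2 N.factorial_ne_zero
    have hpc1 : poch (c+1) N = poch c N * (c + N) / c := by
      field_simp
      rw [← poch_succ', poch_succ]
    have key : c*(c-a-b)*hgt a b c N - (c-a)*(c-b)*hgt a b (c+1) N
        = -c*(((N:ℝ)+1) * hgt a b c (N+1)) + c*((N:ℝ)*hgt a b c N) := by
      rw [hgt, hgt, hgt, poch_succ a, poch_succ b, poch_succ c, hpc1,
        Nat.factorial_succ]
      push_cast
      field_simp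
      ring
    push_cast
    linarith [key, ih]

noncomputable def T (a b c : ℝ) : ℝ := ∑' n : ℕ, hgt a b c n

lemma hc_succ {c : ℝ} (hc : ∀ n : ℕ, c + n ≠ 0) : ∀ n : ℕ, (c + 1) + n ≠ 0 := by
  intro n
  have := hc (n + 1)
  push_cast at this ⊢
  intro hz; apply this; linarith

lemma step_tsum (a b c : ℝ) (hc : ∀ n : ℕ, c + n ≠ 0) (h : 0 < c - a - b) :
    c * (c-a-b) * T a b c = (c-a)*(c-b) * T a b (c+1) := by
  obtain ⟨hs1, hl1⟩ := decay a b c hc h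
  obtain ⟨hs2, _⟩ := decay a b (c+1) (hc_succ hc) (by linarith)
  have hps1 := hs1.hasSum.tendsto_sum_nat
  have hps2 := hs2.hasSum.tendsto_sum_nat
  have hleft : Filter.Tendsto
      (fun N : ℕ => c * (c-a-b) * (∑ k ∈ Finset.range N, hgt a b c k)
        - (c-a)*(c-b) * (∑ k ∈ Finset.range N, hgt a b (c+1) k)) atTop
      (nhds (c * (c-a-b) * T a b c - (c-a)*(c-b) * T a b (c+1))) :=
    (hps1.const_mul _).sub (hps2.const_mul _)
  have hright : Filter.Tendsto
      (fun N : ℕ => -c * ((N:ℝ) * hgt a b c N)) atTop (nhds 0) := by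
    simpa using hl1.const_mul (-c)
  have := tendsto_nhds_unique (hleft.congr (fun N => contiguous a b c hc N)) hright
  linarith [this]

lemma iterate_rel (a b c : ℝ) (hc : ∀ n : ℕ, c + n ≠ 0) (h : 0 < c - a - b) :
    ∀ m : ℕ, T a b c =
      (poch (c-a) m * poch (c-b) m / (poch c m * poch (c-a-b) m)) * T a b (c + m) := by
  have general : ∀ m : ℕ, ∀ c' : ℝ, (∀ n : ℕ, c' + n ≠ 0) → 0 < c' - a - b →
      T a b c' = (poch (c'-a) m * poch (c'-b) m / (poch c' m * poch (c'-a-b) m))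
        * T a b (c' + m) := by
    intro m
    induction m with
    | zero => intro c' _ _; simp [poch_zero]
    | succ m ih =>
      intro c' hc' h'
      have hstep := step_tsum a b c' hc' h'
      have hc'0 : c' ≠ 0 := by have := hc' 0; simpa using this
      have hcab : c' - a - b ≠ 0 := ne_of_gt h'
      have hT : T a b c' = ((c'-a)*(c'-b)) / (c' * (c'-a-b)) * T a b (c'+1) := by
        rw [div_mul_eq_mul_div, eq_div_iff (mul_ne_zero hc'0 hcab)]
        linear_combination hstep
      rw [hT, ih (c'+1) (hc_succ hc') (by linarith)]
      have harg : c' + 1 + (m:ℝ) = c' + ((m+1 : ℕ) : ℝ) := by push_cast; ring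
      rw [harg]
      have e1 : c' + 1 - a = (c' - a) + 1 := by ring
      have e2 : c' + 1 - b = (c' - b) + 1 := by ring
      have e3 : c' + 1 - a - b = (c' - a - b) + 1 := by ring
      rw [e3, e1, e2]
      have key : ((c'-a)*(c'-b)) / (c' * (c'-a-b)) *
          (poch ((c'-a)+1) m * poch ((c'-b)+1) m /
            (poch (c'+1) m * poch ((c'-a-b)+1) m)) =
          poch (c'-a) (m+1) * poch (c'-b) (m+1) /
            (poch c' (m+1) * poch (c'-a-b) (m+1)) := by
        rw [poch_succ' (c'-a) m, poch_succ' (c'-b) m, poch_succ' c' m,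
          poch_succ' (c'-a-b) m, div_mul_div_comm]
        congr 1 <;> ring
      rw [← mul_assoc, key]
  exact fun m => general m c hc h

lemma poch_eq_zero {x : ℝ} {n j : ℕ} (hj : j < n) (hx : x + j = 0) : poch x n = 0 :=
  Finset.prod_eq_zero (Finset.mem_range.2 hj) hx

lemma P_tendsto (a b c : ℝ) (hc : ∀ n : ℕ, c + n ≠ 0) (h : 0 < c - a - b) :
    Filter.Tendsto
      (fun m : ℕ => poch (c-a) m * poch (c-b) m / (poch c m * poch (c-a-b) m)) atTop
      (nhds (Real.Gamma c * Real.Gamma (c-a-b) /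
        (Real.Gamma (c-a) * Real.Gamma (c-b)))) := by
  by_cases hZa : Real.Gamma (c-a) = 0
  · obtain ⟨j₀, hj₀⟩ := (Real.Gamma_eq_zero_iff _).1 hZa
    rw [hZa, zero_mul, div_zero]
    refine tendsto_const_nhds.congr' ?_
    filter_upwards [Filter.eventually_ge_atTop (j₀+1)] with m hm
    rw [poch_eq_zero (by omega : j₀ < m) (by rw [hj₀]; ring), zero_mul, zero_div]
  by_cases hZb : Real.Gamma (c-b) = 0
  · obtain ⟨j₀, hj₀⟩ := (Real.Gamma_eq_zero_iff _).1 hZb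
    rw [hZb, mul_zero, div_zero]
    refine tendsto_const_nhds.congr' ?_
    filter_upwards [Filter.eventually_ge_atTop (j₀+1)] with m hm
    rw [poch_eq_zero (x := c-b) (by omega : j₀ < m) (by rw [hj₀]; ring), mul_zero, zero_div]
  · have hA : ∀ j:ℕ, (c-a)+(j:ℝ) ≠ 0 := by
      intro j hz
      exact hZa ((Real.Gamma_eq_zero_iff _).2 ⟨j, by linarith⟩)
    have hB : ∀ j:ℕ, (c-b)+(j:ℝ) ≠ 0 := by
      intro j hz
      exact hZb ((Real.Gamma_eq_zero_iff _).2 ⟨j, by linarith⟩)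
    have hD : ∀ j:ℕ, (c-a-b)+(j:ℝ) ≠ 0 := by
      intro j
      have : (0:ℝ) ≤ j := Nat.cast_nonneg j
      positivity
    have hlim := core_tendsto' hA hB hc hD hZa hZb
    have hexp : c + (c-a-b) - (c-a) - (c-b) = 0 := by ring
    rw [hexp] at hlim
    simp only [Real.rpow_zero, one_mul] at hlim
    rw [← Filter.tendsto_add_atTop_iff_nat 1]
    exact hlim

lemma T_shift_tendsto_one (a b c : ℝ) (hc : ∀ n : ℕ, c + n ≠ 0) (h : 0 < c - a - b) :
    Filter.Tendsto (fun m : ℕ => T a b (c + m)) atTop (nhds 1) := by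
  obtain ⟨m₀, hm₀⟩ : ∃ m₀ : ℕ, |a| + |b| + 4 - c < m₀ := exists_nat_gt _
  set A := |a| + 1 with hA
  set B := |b| + 1 with hB
  set u₀ := c + m₀ with hu₀
  have hu₀big : |a| + |b| + 4 < u₀ := by rw [hu₀]; linarith
  have hu₀1 : (1:ℝ) ≤ u₀ := by
    have := abs_nonneg a; have := abs_nonneg b; linarith
  have hgsum : Summable (hgt A B u₀) := by
    refine (decay A B u₀ (fun n => ?_) (by
      have := abs_nonneg a; have := abs_nonneg b
      rw [hA, hB]; linarith)).1
    have : (0:ℝ) ≤ n := Nat.cast_nonneg n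
    positivity
  have hF : ∑' k : ℕ, (if k = 0 then (1:ℝ) else 0) = 1 := tsum_ite_eq 0 1
  rw [← Filter.tendsto_add_atTop_iff_nat m₀]
  have main : Filter.Tendsto
      (fun m : ℕ => ∑' k : ℕ, hgt a b (c + ((m + m₀ : ℕ) : ℝ)) k) atTop
      (nhds (∑' k : ℕ, if k = 0 then (1:ℝ) else 0)) := by
    refine tendsto_tsum_of_dominated_convergence hgsum ?_ ?_
    · intro k
      rcases Nat.eq_zero_or_pos k with rfl | hk
      · simp only [if_pos rfl]
        have : ∀ m : ℕ, hgt a b (c + ((m + m₀ : ℕ) : ℝ)) 0 = 1 := by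
          intro m; simp [hgt, poch_zero]
        rw [show (fun m : ℕ => hgt a b (c + ((m + m₀ : ℕ) : ℝ)) 0) = fun _ => (1:ℝ)
          from funext this]
        exact tendsto_const_nhds
      · rw [if_neg (Nat.pos_iff_ne_zero.1 hk)]
        obtain ⟨j, rfl⟩ : ∃ j, k = j + 1 := ⟨k - 1, by omega⟩
        have hden : Filter.Tendsto
            (fun m : ℕ => poch (c + ((m + m₀ : ℕ) : ℝ)) (j+1) * ((j+1).factorial : ℝ))
            atTop atTop := by
          have hbase : Filter.Tendsto (fun m : ℕ => c + ((m + m₀ : ℕ) : ℝ)) atTop atTop := by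
            refine Filter.tendsto_atTop_add_const_left _ c ?_
            exact tendsto_natCast_atTop_atTop.comp (Filter.tendsto_add_atTop_nat m₀)
          refine Filter.tendsto_atTop_mono' _ ?_ hbase
          filter_upwards [hbase.eventually_ge_atTop 1] with m hm1
          set u := c + ((m + m₀ : ℕ) : ℝ)
          have h1 : u ≤ poch u (j+1) := by
            rw [poch_succ']
            have : (1:ℝ) ≤ poch (u+1) j := one_le_poch (by linarith) j
            nlinarith
          have h2 : (1:ℝ) ≤ ((j+1).factorial : ℝ) := by
            exact_mod_cast Nat.one_le_iff_ne_zero.2 (j+1).factorial_ne_zero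
          nlinarith
        have := (tendsto_const_nhds (x := poch a (j+1) * poch b (j+1))
          (f := atTop (α := ℕ))).div_atTop hden
        exact this
    · refine Filter.Eventually.of_forall fun m => fun k => ?_
      set u := c + ((m + m₀ : ℕ) : ℝ) with hu
      have huu₀ : u₀ ≤ u := by
        rw [hu, hu₀]
        have : (m₀:ℝ) ≤ ((m + m₀ : ℕ) : ℝ) := by exact_mod_cast Nat.le_add_left m₀ m
        linarith
      have hp₀ : 0 < poch u₀ k := poch_pos (by linarith) k
      have hpu : 0 < poch u k := poch_pos (by linarith) k
      have hfac : (0:ℝ) < (k.factorial : ℝ) := by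
        exact_mod_cast k.factorial_pos
      rw [Real.norm_eq_abs, hgt, hgt, abs_div, abs_mul, abs_mul,
        abs_of_pos hpu, abs_of_pos hfac]
      have hApos : (0:ℝ) ≤ poch A k := poch_nonneg (by rw [hA]; positivity) k
      have hBpos : (0:ℝ) ≤ poch B k := poch_nonneg (by rw [hB]; positivity) k
      refine div_le_div₀ (mul_nonneg hApos hBpos) ?_ (mul_pos hp₀ hfac) ?_
      · have h1 : |poch a k| ≤ poch A k :=
          le_trans (abs_poch_le a k) (poch_le_poch (abs_nonneg a) (by rw [hA]; linarith) k)
        have h2 : |poch b k| ≤ poch B k :=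
          le_trans (abs_poch_le b k) (poch_le_poch (abs_nonneg b) (by rw [hB]; linarith) k)
        exact mul_le_mul h1 h2 (abs_nonneg _) (poch_nonneg (by rw [hA]; positivity) k)
      · exact mul_le_mul_of_nonneg_right (poch_le_poch (by linarith) huu₀ k) (le_of_lt hfac)
  rw [hF] at main
  exact main

end PochAux


open PochAux

/-- Gauss summation: for `c` not a nonpositive integer and `c - a - b > 0`, the
series `F(a,b;c;1)` converges and sums to `Γ(c)Γ(c-a-b)/(Γ(c-a)Γ(c-b))`. -/
theorem gauss_summation (a b c : ℝ) (hc : ∀ n : ℕ, c ≠ -(n : ℝ))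
    (h : 0 < c - a - b) :
    Summable (fun n : ℕ => poch a n * poch b n / (poch c n * n.factorial)) ∧
      ∑' n : ℕ, poch a n * poch b n / (poch c n * n.factorial) =
        Real.Gamma c * Real.Gamma (c - a - b) /
          (Real.Gamma (c - a) * Real.Gamma (c - b)) := by
  have hc' : ∀ n : ℕ, c + (n:ℝ) ≠ 0 := by
    intro n hz
    exact hc n (by linarith)
  obtain ⟨hsum, _⟩ := decay a b c hc' h
  refine ⟨hsum, ?_⟩
  have hiter := iterate_rel a b c hc' h
  have hP := P_tendsto a b c hc' h
  have hT1 := T_shift_tendsto_one a b c hc' h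
  have hprod : Filter.Tendsto
      (fun m : ℕ => (poch (c-a) m * poch (c-b) m / (poch c m * poch (c-a-b) m))
        * T a b (c + m)) atTop
      (nhds (Real.Gamma c * Real.Gamma (c-a-b) /
        (Real.Gamma (c-a) * Real.Gamma (c-b)) * 1)) := hP.mul hT1
  rw [mul_one] at hprod
  have hconst : Filter.Tendsto (fun _ : ℕ => T a b c) atTop
      (nhds (Real.Gamma c * Real.Gamma (c-a-b) /
        (Real.Gamma (c-a) * Real.Gamma (c-b)))) :=
    hprod.congr fun m => (hiter m).symm
  have : T a b c = Real.Gamma c * Real.Gamma (c-a-b) /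
      (Real.Gamma (c-a) * Real.Gamma (c-b)) :=
    tendsto_nhds_unique tendsto_const_nhds hconst
  rw [← this]
  rfl
end
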